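/- Let λ be a connectivity function on subsets of a finite set E and let P be a robust partition of E such that (i) λ(∪_{X∈Q} X) ≠ 1 for all Q ⊆ P, and (ii) for every X ⊆ E, if there exist two distinct parts X₁, X₂ ∈ P each of which meets both X and its complement, then λ(X) > 1. If λ admits a branch-decomposition of width at most 1, then λ(X) = 0 for every part X ∈ P. -/

import Mathlib

open SimpleGraph

section TreeLemmas
variable {V : Type*} {G : SimpleGraph V}

lemma bridge_not_reach (hT : G.IsTree) {u v : V} (h : G.Adj u v) :
    ¬ (G.deleteEdges {s(u,v)}).Reachable u v := by
  have hb := (isAcyclic_iff_forall_adj_isBridge.mp hT.IsAcyclic) h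
  exact isBridge_iff.mp hb

lemma reach_or_reach (hT : G.IsTree) {u v : V} (h : G.Adj u v) (x : V) :
    (G.deleteEdges {s(u,v)}).Reachable u x ∨ (G.deleteEdges {s(u,v)}).Reachable v x := by
  have step : ∀ {y x : V} (_ : G.Walk y x),
      ((G.deleteEdges {s(u,v)}).Reachable u y ∨ (G.deleteEdges {s(u,v)}).Reachable v y) →
      ((G.deleteEdges {s(u,v)}).Reachable u x ∨ (G.deleteEdges {s(u,v)}).Reachable v x) := by
    intro y x w
    induction w with
    | nil => exact id
    | @cons y c x hyc p ih =>
      intro hy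
      apply ih
      by_cases he : s(y, c) = s(u, v)
      · rcases Sym2.eq_iff.mp he with ⟨rfl, rfl⟩ | ⟨rfl, rfl⟩
        · exact Or.inr Reachable.rfl
        · exact Or.inl Reachable.rfl
      · have hadj : (G.deleteEdges {s(u,v)}).Adj y c := by
          rw [deleteEdges_adj]; exact ⟨hyc, by simpa using he⟩
        exact hy.imp (·.trans hadj.reachable) (·.trans hadj.reachable)
  obtain ⟨w⟩ := hT.isConnected.preconnected u x
  exact step w (Or.inl Reachable.rfl)

lemma transfer_branch (hT : G.IsTree) {t a b : V} (hta : G.Adj t a) (htb : G.Adj t b)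
    (hab : a ≠ b) {x : V} (hr : (G.deleteEdges {s(t,b)}).Reachable b x) :
    (G.deleteEdges {s(t,a)}).Reachable b x := by
  classical
  obtain ⟨w⟩ := hr
  by_cases ht : t ∈ w.support
  · exact absurd ((w.takeUntil t ht).reachable).symm (bridge_not_reach hT htb)
  · refine ⟨w.transfer _ ?_⟩
    intro e he
    have heG : e ∈ (G.deleteEdges {s(t,b)}).edgeSet := w.edges_subset_edgeSet he
    rw [edgeSet_deleteEdges] at heG
    rw [edgeSet_deleteEdges]
    refine ⟨heG.1, ?_⟩
    intro hea
    rw [Set.mem_singleton_iff] at hea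
    subst hea
    exact ht (w.fst_mem_support_of_mem_edges he)

lemma exists_branch (hT : G.IsTree) {t x : V} (hx : x ≠ t) :
    ∃ b, G.Adj t b ∧ (G.deleteEdges {s(t,b)}).Reachable b x := by
  have step : ∀ {y x : V} (_ : G.Walk y x),
      (y = t ∨ ∃ b, G.Adj t b ∧ (G.deleteEdges {s(t,b)}).Reachable b y) →
      (x = t ∨ ∃ b, G.Adj t b ∧ (G.deleteEdges {s(t,b)}).Reachable b x) := by
    intro y x w
    induction w with
    | nil => exact id
    | @cons y c x hyc p ih =>
      intro hy
      apply ih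
      rcases hy with hyt | ⟨b, hb, hr⟩
      · by_cases hc : c = t
        · exact Or.inl hc
        · exact Or.inr ⟨c, hyt ▸ hyc, Reachable.rfl⟩
      · by_cases hc : c = t
        · exact Or.inl hc
        · by_cases he : s(y, c) = s(t, b)
          · rcases Sym2.eq_iff.mp he with ⟨hyt, hcb⟩ | ⟨hyb, hct⟩
            · subst hcb; exact Or.inr ⟨_, hb, Reachable.rfl⟩
            · exact absurd hct hc
          · refine Or.inr ⟨b, hb, hr.trans (Adj.reachable ?_)⟩
            rw [deleteEdges_adj]; exact ⟨hyc, by simpa using he⟩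
  obtain ⟨w⟩ := hT.isConnected.preconnected t x
  rcases step w (Or.inl rfl) with rfl | hb
  · exact absurd rfl hx
  · exact hb

end TreeLemmas

section Sink
variable {V : Type*} [Fintype V] {G : SimpleGraph V}

lemma leaf_reach [DecidableRel G.Adj] {t u x : V} (hnb : G.neighborFinset t = {u})
    (hr : (G.deleteEdges {s(t,u)}).Reachable t x) : x = t := by
  obtain ⟨w⟩ := hr
  cases w with
  | nil => rfl
  | cons h p =>
    exfalso
    rcases SimpleGraph.deleteEdges_adj.mp h with ⟨hadj, hne⟩
    have hb : _ ∈ G.neighborFinset t := (SimpleGraph.mem_neighborFinset _ _ _).mpr hadj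
    rw [hnb, Finset.mem_singleton] at hb
    subst hb
    exact hne rfl

lemma exists_sink (hT : G.IsTree) (H : V → V → Prop)
    (Htot : ∀ u v, G.Adj u v → H u v ∨ H v u) (v0 : V) :
    ∃ t, ∀ u, G.Adj t u → H t u := by
  classical
  by_cases h0 : ∀ u, G.Adj v0 u → H v0 u
  · exact ⟨v0, h0⟩
  push_neg at h0
  obtain ⟨u0, hadj0, hH0⟩ := h0
  suffices key : ∀ n (v u : V), G.Adj v u → ¬ H v u →
      {w | (G.deleteEdges {s(v,u)}).Reachable u w}.ncard ≤ n →
      ∃ t, ∀ z, G.Adj t z → H t z by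
    exact key _ v0 u0 hadj0 hH0 le_rfl
  intro n
  induction n with
  | zero =>
    intro v u hadj _ hcard
    have hmem : u ∈ {w | (G.deleteEdges {s(v,u)}).Reachable u w} := Reachable.rfl
    have hpos := (Set.ncard_pos (Set.toFinite _)).mpr ⟨u, hmem⟩
    omega
  | succ n ih =>
    intro v u hadj hHvu hcard
    by_cases hs : ∀ z, G.Adj u z → H u z
    · exact ⟨u, hs⟩
    push_neg at hs
    obtain ⟨w, hw, hHuw⟩ := hs
    have hwv : w ≠ v := by
      rintro rfl
      exact hHuw ((Htot _ u hadj).resolve_left hHvu)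
    refine ih u w hw hHuw ?_
    have hsub : {z | (G.deleteEdges {s(u,w)}).Reachable w z}
        ⊆ {z | (G.deleteEdges {s(v,u)}).Reachable u z} := by
      intro z hz
      have h1 : (G.deleteEdges {s(u,v)}).Reachable w z :=
        transfer_branch hT hadj.symm hw hwv.symm hz
      rw [Sym2.eq_swap (a := u) (b := v)] at h1
      have hadjw : (G.deleteEdges {s(v,u)}).Adj u w := by
        rw [SimpleGraph.deleteEdges_adj]
        refine ⟨hw, ?_⟩
        simp only [Set.mem_singleton_iff]
        intro hcontra
        rcases Sym2.eq_iff.mp hcontra with ⟨h1', h2'⟩ | ⟨h1', h2'⟩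
        · exact hadj.ne h1'.symm
        · exact hwv h2'
      exact hadjw.reachable.trans h1
    have hmem : u ∈ {z | (G.deleteEdges {s(v,u)}).Reachable u z} := Reachable.rfl
    have hnot : u ∉ {z | (G.deleteEdges {s(u,w)}).Reachable w z} := by
      intro hu
      exact bridge_not_reach hT hw hu.symm
    have hss : {z | (G.deleteEdges {s(u,w)}).Reachable w z}
        ⊂ {z | (G.deleteEdges {s(v,u)}).Reachable u z} :=
      ⟨hsub, fun hsub' => hnot (hsub' hmem)⟩
    have hlt := Set.ncard_lt_ncard hss (Set.toFinite _)
    omega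

end Sink



/-- A branch-decomposition of a ground set `E`: a subcubic tree together with a
bijection from `E` to the leaves of the tree. -/
structure BranchDecomp (E : Type*) where
  V : Type
  [fV : Fintype V]
  G : SimpleGraph V
  [dA : DecidableRel G.Adj]
  isTree : G.IsTree
  subcubic : ∀ v : V, G.degree v = 1 ∨ G.degree v = 3
  L : E ≃ {v : V // G.degree v = 1}

attribute [instance] BranchDecomp.fV BranchDecomp.dA

/-- The side of the edge `{u,v}` containing `u`: those elements of `E` whose leaf is
reachable from `u` after deleting the edge. -/
def BranchDecomp.side {E : Type*} (D : BranchDecomp E) (u v : D.V) : Set E :=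
  {x : E | (D.G.deleteEdges {s(u, v)}).Reachable u (D.L x).1}

/-- The width of a branch-decomposition with respect to a set function `lam`. -/
noncomputable def BranchDecomp.width {E : Type*} (D : BranchDecomp E)
    (lam : Set E → ℕ) : ℕ :=
  Finset.sup (Finset.univ.filter fun p : D.V × D.V => D.G.Adj p.1 p.2)
    (fun p => lam (D.side p.1 p.2))

/-- The branch-width of a set function `lam : Set E → ℕ`. -/
noncomputable def branchWidth {E : Type*} (lam : Set E → ℕ) : ℕ :=
  if Nat.card E ≤ 1 then 0
  else sInf {w | ∃ D : BranchDecomp E, D.width lam = w}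

/-- The path-width of a set function `lam : Set E → ℕ` : the minimum over linear layouts
of the maximum of `lam` on proper prefixes. -/
noncomputable def pathWidth (E : Type*) [Fintype E] (lam : Set E → ℕ) : ℕ :=
  if Fintype.card E ≤ 1 then 0
  else sInf {w | ∃ f : Fin (Fintype.card E) ≃ E,
    (Finset.sup (Finset.univ.filter fun i : Fin (Fintype.card E) =>
        (i : ℕ) < Fintype.card E - 1)
      (fun i => lam {x | f.symm x ≤ i})) = w}

/-- `lam` is a connectivity function: symmetric, submodular, zero on the empty set. -/
structure IsConnFn {E : Type*} (lam : Set E → ℕ) : Prop where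
  symm : ∀ X, lam X = lam Xᶜ
  submod : ∀ X Y, lam (X ∩ Y) + lam (X ∪ Y) ≤ lam X + lam Y
  empty : lam ∅ = 0

/-- The rank of the set `X` of columns of the matrix `A`. -/
noncomputable def colRank {m E F : Type*} [Fintype m] [Field F]
    (A : Matrix m E F) (X : Set E) : ℕ :=
  Module.finrank F (Submodule.span F (Matrix.transpose A '' X))

/-- The connectivity function of the matroid represented by the columns of `A`. -/
noncomputable def matLam {m E F : Type*} [Fintype m] [Field F]
    (A : Matrix m E F) (X : Set E) : ℕ :=
  colRank A X + colRank A Xᶜ - colRank A Set.univ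

/-- The branch-width of the matroid represented by the columns of `A`. -/
noncomputable def matBW {m E F : Type*} [Fintype m] [Field F]
    (A : Matrix m E F) : ℕ :=
  branchWidth (matLam A)

/-- A matrix represents a simple matroid iff it has no zero column and no two
distinct columns are linearly dependent. -/
def SimpleRep {m n F : Type*} [Field F] (A : Matrix m n F) : Prop :=
  (∀ j, Matrix.transpose A j ≠ 0) ∧
    ∀ j j' : n, j ≠ j' → ∀ c : F, Matrix.transpose A j ≠ c • Matrix.transpose A j'

open scoped Classical in
/-- The cut-rank of a set `X` for a square matrix `A`: the rank of the submatrix with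
rows in `X` and columns in the complement of `X`. -/
noncomputable def cutRank {E F : Type*} [Fintype E] [Field F]
    (A : Matrix E E F) (X : Set E) : ℕ :=
  (A.submatrix (fun x : X => (x : E)) (fun y : ↥Xᶜ => (y : E))).rank

theorem stmt14 {E : Type*} [Finite E] (lam : Set E → ℕ) (h : IsConnFn lam)
    (P : Set (Set E))
    (hdisj : ∀ X ∈ P, ∀ Y ∈ P, X ≠ Y → Disjoint X Y)
    (hcover : ⋃₀ P = Set.univ) (hne : ∀ X ∈ P, X.Nonempty)
    (hrobust : ∀ X ∈ P, ∀ X1 X2 : Set E, Disjoint X1 X2 → X1 ∪ X2 = X →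
      lam X ≤ lam X1 ∨ lam X ≤ lam X2)
    (h1 : ∀ Q ⊆ P, lam (⋃₀ Q) ≠ 1)
    (h2 : ∀ X : Set E, (∃ X1 ∈ P, ∃ X2 ∈ P, X1 ≠ X2 ∧
      (X ∩ X1).Nonempty ∧ (X1 \ X).Nonempty ∧
      (X ∩ X2).Nonempty ∧ (X2 \ X).Nonempty) → 1 < lam X)
    (hD : ∃ D : BranchDecomp E, D.width lam ≤ 1) :
    ∀ X ∈ P, lam X = 0 := by
  obtain ⟨D, hw⟩ := hD
  classical
  have hside_le : ∀ u v : D.V, D.G.Adj u v → lam (D.side u v) ≤ 1 := by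
    intro u v huv
    unfold BranchDecomp.width at hw
    exact le_trans (Finset.le_sup (f := fun p : D.V × D.V => lam (D.side p.1 p.2))
      (Finset.mem_filter.mpr ⟨Finset.mem_univ (u, v), huv⟩)) hw
  have hcompl : ∀ u v : D.V, D.G.Adj u v → D.side v u = (D.side u v)ᶜ := by
    intro u v huv
    ext x
    simp only [BranchDecomp.side, Set.mem_setOf_eq, Set.mem_compl_iff]
    constructor
    · intro hv hu
      rw [Sym2.eq_swap (a := v) (b := u)] at hv
      exact bridge_not_reach D.isTree huv (hu.trans hv.symm)
    · intro hu
      rcases reach_or_reach D.isTree huv (D.L x).1 with h' | h'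
      · exact absurd h' hu
      · rwa [Sym2.eq_swap (a := v) (b := u)]
  intro X hX
  have hX1 : lam X ≠ 1 := by
    have := h1 {X} (by intro Z hZ; rw [Set.mem_singleton_iff] at hZ; subst hZ; exact hX)
    simpa using this
  by_contra hne0
  have hk2 : 2 ≤ lam X := by omega
  set k := lam X with hkdef
  have subadd : ∀ A B : Set E, lam (A ∪ B) ≤ lam A + lam B := by
    intro A B; have := h.submod A B; omega
  have Htot : ∀ u v : D.V, D.G.Adj u v →
      (k ≤ lam (X ∩ D.side u v)) ∨ (k ≤ lam (X ∩ D.side v u)) := by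
    intro u v huv
    refine hrobust X hX (X ∩ D.side u v) (X ∩ D.side v u) ?_ ?_
    · rw [hcompl u v huv]
      exact disjoint_compl_right.mono Set.inter_subset_right Set.inter_subset_right
    · rw [hcompl u v huv, ← Set.inter_union_distrib_left, Set.union_compl_self,
        Set.inter_univ]
  obtain ⟨x0, hx0⟩ := hne X hX
  obtain ⟨t, hsink⟩ := exists_sink D.isTree (fun u v => k ≤ lam (X ∩ D.side u v)) Htot
    (D.L x0).1
  have branch0 : ∀ B : Set E, lam B ≤ 1 → k ≤ lam (X ∩ Bᶜ) →
      (X ∩ B = ∅ ∧ lam (B \ X) ≤ 1) ∨ lam (B \ X) = 0 := by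
    intro B hB hkB
    by_cases hXB : X ∩ B = ∅
    · left
      refine ⟨hXB, ?_⟩
      have hBX : B \ X = B := by
        ext y
        simp only [Set.mem_diff, and_iff_left_iff_imp]
        intro hyB hyX
        exact Set.eq_empty_iff_forall_notMem.mp hXB y ⟨hyX, hyB⟩
      rw [hBX]; exact hB
    right
    have hXBne : (X ∩ B).Nonempty := Set.nonempty_iff_ne_empty.mpr hXB
    have hXnotB : (X \ B).Nonempty := by
      by_contra hcon
      rw [Set.not_nonempty_iff_eq_empty] at hcon
      have hdiffeq : X ∩ Bᶜ = ∅ := by rw [← Set.diff_eq]; exact hcon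
      rw [hdiffeq, h.empty] at hkB; omega
    have honly : ∀ Z ∈ P, Z ≠ X → Z ∩ B = ∅ ∨ Z ⊆ B := by
      intro Z hZ hZX
      by_contra hcon
      push_neg at hcon
      obtain ⟨hZB, hZnB⟩ := hcon
      obtain ⟨z, hzZ, hznB⟩ := Set.not_subset.mp hZnB
      have := h2 B ⟨X, hX, Z, hZ, Ne.symm hZX, by rwa [Set.inter_comm], hXnotB,
        by rwa [Set.inter_comm], ⟨z, hzZ, hznB⟩⟩
      omega
    have hBXU : B \ X = ⋃₀ {Z | Z ∈ P ∧ Z ≠ X ∧ Z ⊆ B} := by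
      ext y
      constructor
      · rintro ⟨hyB, hyX⟩
        have hyU : y ∈ ⋃₀ P := by rw [hcover]; trivial
        obtain ⟨Z, hZ, hyZ⟩ := hyU
        have hZX : Z ≠ X := fun hc => hyX (hc ▸ hyZ)
        have hZB : Z ⊆ B := by
          rcases honly Z hZ hZX with hc | hc
          · exact absurd (Set.mem_inter hyZ hyB) (Set.eq_empty_iff_forall_notMem.mp hc y)
          · exact hc
        exact ⟨Z, ⟨hZ, hZX, hZB⟩, hyZ⟩
      · rintro ⟨Z, ⟨hZ, hZX, hZB⟩, hyZ⟩
        exact ⟨hZB hyZ, fun hyX => Set.disjoint_left.mp (hdisj Z hZ X hX hZX) hyZ hyX⟩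
    have hne1 : lam (B \ X) ≠ 1 := by
      rw [hBXU]; exact h1 _ (fun Z hZ => hZ.1)
    have hsub := h.submod Xᶜ B
    have e1 : Xᶜ ∩ B = B \ X := by rw [Set.inter_comm, Set.diff_eq]
    have e2 : lam (Xᶜ ∪ B) = lam (X ∩ Bᶜ) := by
      rw [h.symm (Xᶜ ∪ B), Set.compl_union, compl_compl]
    have e3 : lam Xᶜ = k := (h.symm X).symm
    rw [e1, e2, e3] at hsub
    omega
  have hXc : lam Xᶜ = k := (h.symm X).symm
  rcases D.subcubic t with hdeg | hdeg
  · -- leaf case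
    obtain ⟨u, hu⟩ := Finset.card_eq_one.mp ((D.G.card_neighborFinset_eq_degree t).trans hdeg)
    have hadj : D.G.Adj t u := (SimpleGraph.mem_neighborFinset _ _ _).mp
      (by rw [hu]; exact Finset.mem_singleton_self u)
    have hS : D.side t u = {D.L.symm ⟨t, hdeg⟩} := by
      ext x
      simp only [BranchDecomp.side, Set.mem_setOf_eq, Set.mem_singleton_iff]
      constructor
      · intro hr
        have hxt := leaf_reach hu hr
        have hLx : D.L x = ⟨t, hdeg⟩ := Subtype.ext hxt
        rw [← hLx, Equiv.symm_apply_apply]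
      · rintro rfl
        have hLt : (D.L (D.L.symm ⟨t, hdeg⟩)).1 = t := by rw [Equiv.apply_symm_apply]
        rw [hLt]
    have hsk := hsink u hadj
    rw [hS] at hsk
    by_cases hx : D.L.symm ⟨t, hdeg⟩ ∈ X
    · have hXint : X ∩ {D.L.symm ⟨t, hdeg⟩} = {D.L.symm ⟨t, hdeg⟩} :=
        Set.inter_eq_self_of_subset_right (Set.singleton_subset_iff.mpr hx)
      rw [hXint] at hsk
      have hle := hside_le t u hadj
      rw [hS] at hle
      omega
    · have hXint : X ∩ {D.L.symm ⟨t, hdeg⟩} = ∅ := by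
        simp [Set.inter_singleton_eq_empty, hx]
      rw [hXint, h.empty] at hsk
      omega
  · -- degree 3 case
    obtain ⟨u₁, u₂, u₃, h12, h13, h23, hnb⟩ :=
      Finset.card_eq_three.mp ((D.G.card_neighborFinset_eq_degree t).trans hdeg)
    have hadj : ∀ u ∈ ({u₁, u₂, u₃} : Finset D.V), D.G.Adj t u := by
      intro u hu'
      exact (SimpleGraph.mem_neighborFinset _ _ _).mp (by rw [hnb]; exact hu')
    have had1 : D.G.Adj t u₁ := hadj u₁ (by simp)
    have had2 : D.G.Adj t u₂ := hadj u₂ (by simp)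
    have had3 : D.G.Adj t u₃ := hadj u₃ (by simp)
    set B₁ := D.side u₁ t with hB1def
    set B₂ := D.side u₂ t with hB2def
    set B₃ := D.side u₃ t with hB3def
    have cov : ∀ x : E, x ∈ B₁ ∨ x ∈ B₂ ∨ x ∈ B₃ := by
      intro x
      have hlt : (D.L x).1 ≠ t := by
        intro hc
        have h1' := (D.L x).2
        rw [hc, hdeg] at h1'
        omega
      obtain ⟨b, hb, hr⟩ := exists_branch D.isTree hlt
      have hbmem : b ∈ D.G.neighborFinset t := (SimpleGraph.mem_neighborFinset _ _ _).mpr hb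
      rw [hnb] at hbmem
      rw [Sym2.eq_swap (a := t) (b := b)] at hr
      rcases Finset.mem_insert.mp hbmem with rfl | hbmem'
      · exact Or.inl hr
      rcases Finset.mem_insert.mp hbmem' with rfl | hbmem''
      · exact Or.inr (Or.inl hr)
      rw [Finset.mem_singleton] at hbmem''
      subst hbmem''
      exact Or.inr (Or.inr hr)
    have hBle1 : lam B₁ ≤ 1 := hside_le u₁ t had1.symm
    have hBle2 : lam B₂ ≤ 1 := hside_le u₂ t had2.symm
    have hBle3 : lam B₃ ≤ 1 := hside_le u₃ t had3.symm
    have hk1 : k ≤ lam (X ∩ B₁ᶜ) := by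
      have := hsink u₁ had1; rwa [hcompl u₁ t had1.symm] at this
    have hk2' : k ≤ lam (X ∩ B₂ᶜ) := by
      have := hsink u₂ had2; rwa [hcompl u₂ t had2.symm] at this
    have hk3 : k ≤ lam (X ∩ B₃ᶜ) := by
      have := hsink u₃ had3; rwa [hcompl u₃ t had3.symm] at this
    have hempt : ∀ A B C : Set E, (∀ y : E, y ∈ A ∨ y ∈ B ∨ y ∈ C) →
        X ∩ A = ∅ → X ∩ B = ∅ → k ≤ lam (X ∩ Cᶜ) → False := by
      intro A B C hcov' hA hB hkC
      have hCempty : X ∩ Cᶜ = ∅ := by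
        ext y
        simp only [Set.mem_inter_iff, Set.mem_compl_iff, Set.mem_empty_iff_false, iff_false,
          not_and]
        intro hyX hyC
        rcases hcov' y with hy | hy | hy
        · exact Set.eq_empty_iff_forall_notMem.mp hA y ⟨hyX, hy⟩
        · exact Set.eq_empty_iff_forall_notMem.mp hB y ⟨hyX, hy⟩
        · exact hyC hy
      rw [hCempty, h.empty] at hkC
      omega
    have hsum : lam Xᶜ ≤ lam (B₁ \ X) + lam (B₂ \ X) + lam (B₃ \ X) := by
      have hXceq : Xᶜ = (B₁ \ X) ∪ (B₂ \ X) ∪ (B₃ \ X) := by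
        ext y
        constructor
        · intro hy
          rcases cov y with h' | h' | h'
          · exact Or.inl (Or.inl ⟨h', hy⟩)
          · exact Or.inl (Or.inr ⟨h', hy⟩)
          · exact Or.inr ⟨h', hy⟩
        · rintro ((⟨_, hy⟩ | ⟨_, hy⟩) | ⟨_, hy⟩) <;> exact hy
      rw [hXceq]
      have s1 := subadd ((B₁ \ X) ∪ (B₂ \ X)) (B₃ \ X)
      have s2 := subadd (B₁ \ X) (B₂ \ X)
      omega
    rcases branch0 B₁ hBle1 hk1 with ⟨hE1, hL1⟩ | hZ1 <;>
      rcases branch0 B₂ hBle2 hk2' with ⟨hE2, hL2⟩ | hZ2 <;>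
      rcases branch0 B₃ hBle3 hk3 with ⟨hE3, hL3⟩ | hZ3
    · exact hempt B₁ B₂ B₃ cov hE1 hE2 hk3
    · exact hempt B₁ B₂ B₃ cov hE1 hE2 hk3
    · exact hempt B₁ B₃ B₂ (fun y => by rcases cov y with a | b | c <;> tauto) hE1 hE3 hk2'
    · omega
    · exact hempt B₂ B₃ B₁ (fun y => by rcases cov y with a | b | c <;> tauto) hE2 hE3 hk1
    · omega
    · omega
    · omega
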